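/- Under the hypotheses of the C¹ diagonalization theorem, there exists a continuously differentiable function λ : [a,b] → ℝ such that λ(t) is an eigenvalue of A(t) for every t ∈ [a,b]. Specifically, with A(t) = [[f(t), h(t)], [h̄(t), g(t)]] and μ a C¹ function with |μ(t)| = √((f(t)−g(t))² + 4|h(t)|²), the function λ(t) = (f(t)+g(t)+μ(t))/2 is C¹ and is an eigenvalue of A(t) for each t. -/

import Mathlib

open Matrix Set

theorem C1_eigenvalue_branch
    (a b : ℝ) (hab : a ≤ b) (f g μ : ℝ → ℝ) (h : ℝ → ℂ)
    (hf : ContDiffOn ℝ 1 f (Icc a b)) (hg : ContDiffOn ℝ 1 g (Icc a b))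
    (hh : ContDiffOn ℝ 1 h (Icc a b)) (hμ : ContDiffOn ℝ 1 μ (Icc a b))
    (hfin : {t ∈ Icc a b | f t = g t ∧ h t = 0}.Finite)
    (hμabs : ∀ t ∈ Icc a b,
      |μ t| = Real.sqrt ((f t - g t) ^ 2 + 4 * ‖h t‖ ^ 2))
    (A : ℝ → Matrix (Fin 2) (Fin 2) ℂ)
    (hA : ∀ t, A t = !![(f t : ℂ), h t; star (h t), (g t : ℂ)]) :
    ContDiffOn ℝ 1 (fun t => (f t + g t + μ t) / 2) (Icc a b) ∧
    ∀ t ∈ Icc a b,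
      det ((((f t + g t + μ t) / 2 : ℝ) : ℂ) • (1 : Matrix (Fin 2) (Fin 2) ℂ) - A t) = 0 := by
  constructor
  · exact ((hf.add hg).add hμ).div_const 2
  · intro t ht
    have hsq : μ t ^ 2 = (f t - g t) ^ 2 + 4 * ‖h t‖ ^ 2 := by
      have h1 := hμabs t ht
      have h2 : (0:ℝ) ≤ (f t - g t) ^ 2 + 4 * ‖h t‖ ^ 2 := by positivity
      calc μ t ^ 2 = |μ t| ^ 2 := (sq_abs _).symm
        _ = _ := by rw [h1, Real.sq_sqrt h2]
    have hhc : h t * star (h t) = ((‖h t‖ ^ 2 : ℝ) : ℂ) := by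
      rw [show star (h t) = (starRingEnd ℂ) (h t) from rfl, Complex.mul_conj]
      rw [Complex.normSq_eq_norm_sq]
    rw [hA]
    have : ((((f t + g t + μ t) / 2 : ℝ)) : ℂ) • (1 : Matrix (Fin 2) (Fin 2) ℂ) -
        !![(f t : ℂ), h t; star (h t), (g t : ℂ)] =
        !![(((f t + g t + μ t) / 2 : ℝ) : ℂ) - f t, -h t;
           -star (h t), (((f t + g t + μ t) / 2 : ℝ) : ℂ) - g t] := by
      ext i j
      fin_cases i <;> fin_cases j <;>
        simp [Matrix.one_apply, Matrix.smul_apply, Matrix.sub_apply]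
    rw [this, Matrix.det_fin_two_of]
    have key : ((((f t + g t + μ t) / 2 : ℝ) : ℂ) - f t) *
        ((((f t + g t + μ t) / 2 : ℝ) : ℂ) - g t) = ((‖h t‖ ^ 2 : ℝ) : ℂ) := by
      have : (((f t + g t + μ t) / 2 - f t) * ((f t + g t + μ t) / 2 - g t) : ℝ)
          = ‖h t‖ ^ 2 := by nlinarith [hsq]
      calc _ = ((((f t + g t + μ t) / 2 - f t) * ((f t + g t + μ t) / 2 - g t) : ℝ) : ℂ) := by
              push_cast; ring
        _ = _ := by rw [this]
    rw [key]
    rw [show -h t * -star (h t) = h t * star (h t) by ring, hhc, sub_self]
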